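/- (Zavist–Tideman characterization.) Let A be a finite set of alternatives, let P be a profile of strict total orders on A, and let w be its weighted majority margin. Let R be a strict total order on A. Then R is the output ranking of the ranked pairs procedure on P under some tiebreaking order if and only if for every pair of alternatives i,j ∈ A with i ≻_R j, there exists a directed path from i to j in the graph G_R whose minimum edge weight (under w) is at least w(j,i). -/

import Mathlib

/-- `u` reaches `v`: there is a nonempty directed path from `u` to `v` using edges in `E`. -/
def reaches {A : Type*} (E : Set (A × A)) (u v : A) : Prop :=
  Relation.TransGen (fun a b => (a, b) ∈ E) u v

/-- A digraph (with edge set `E`) is acyclic if no vertex reaches itself. -/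
def Acyclic {A : Type*} (E : Set (A × A)) : Prop := ∀ v, ¬ reaches E v v

open Classical in
/-- The weighted majority margin of the profile `P`:
(number of votes ranking `a` above `b`) − (number of votes ranking `b` above `a`). -/
noncomputable def margin {A : Type*} (P : List (A → A → Prop)) (a b : A) : ℤ :=
  (P.countP (fun v => decide (v a b)) : ℤ) - (P.countP (fun v => decide (v b a)) : ℤ)

open Classical in
/-- Greedy insertion (the locking-in step of ranked pairs): process the edges of the
list in order, locking in each edge if and only if the resulting graph is still acyclic. -/
noncomputable def greedy {A : Type*} (E : Set (A × A)) : List (A × A) → Set (A × A)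
  | [] => E
  | e :: rest => greedy (if Acyclic (insert e E) then insert e E else E) rest

section Aux

variable {A : Type*}

lemma reaches_mono {E E' : Set (A × A)} (h : E ⊆ E') {u v : A} (hr : reaches E u v) :
    reaches E' u v :=
  Relation.TransGen.mono (fun a b hab => h hab) _ _ hr

open Classical in
lemma greedy_nil (E : Set (A × A)) : greedy E [] = E := rfl

open Classical in
lemma greedy_cons (E : Set (A × A)) (e : A × A) (l : List (A × A)) :
    greedy E (e :: l) = greedy (if Acyclic (insert e E) then insert e E else E) l := rfl

lemma greedy_append (E : Set (A × A)) (l1 l2 : List (A × A)) :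
    greedy E (l1 ++ l2) = greedy (greedy E l1) l2 := by
  induction l1 generalizing E with
  | nil => simp [greedy_nil]
  | cons e rest ih => simp only [List.cons_append, greedy_cons]; exact ih _

lemma subset_greedy (E : Set (A × A)) (l : List (A × A)) : E ⊆ greedy E l := by
  induction l generalizing E with
  | nil => exact le_refl E
  | cons e rest ih =>
    intro x hx
    rw [greedy_cons]
    refine ih _ ?_
    split
    · exact Set.mem_insert_of_mem _ hx
    · exact hx

lemma greedy_subset (E : Set (A × A)) (l : List (A × A)) :
    greedy E l ⊆ E ∪ {f | f ∈ l} := by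
  induction l generalizing E with
  | nil => simp [greedy_nil]
  | cons e rest ih =>
    rw [greedy_cons]
    refine (ih _).trans ?_
    intro x hx
    rcases hx with hx | hx
    · split at hx
      · rcases hx with rfl | hx
        · exact Or.inr (by simp)
        · exact Or.inl hx
      · exact Or.inl hx
    · exact Or.inr (show x ∈ {f | f ∈ e :: rest} from List.mem_cons_of_mem _ hx)

lemma greedy_acyclic {E : Set (A × A)} (h : Acyclic E) (l : List (A × A)) :
    Acyclic (greedy E l) := by
  induction l generalizing E with
  | nil => exact h
  | cons e rest ih =>
    rw [greedy_cons]
    refine ih ?_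
    split
    · assumption
    · exact h

lemma acyclic_of_subrel {R : A → A → Prop} (htrans : Transitive R) (hirr : ∀ a, ¬ R a a)
    {E : Set (A × A)} (h : ∀ e ∈ E, R e.1 e.2) : Acyclic E := by
  intro v hv
  refine hirr v ?_
  have : Relation.TransGen R v v := Relation.TransGen.mono (fun a b hab => h (a, b) hab) _ _ hv
  haveI hRtr : IsTrans A R := ⟨fun a b c h1 h2 => htrans h1 h2⟩
  rwa [Relation.transGen_eq_self (r := R)] at this

lemma acyclic_empty : Acyclic (∅ : Set (A × A)) :=
  acyclic_of_subrel (R := fun _ _ => False) (fun _ _ _ h => h.elim) (fun _ h => h)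
    (fun _ h => h.elim)

lemma transGen_insert {S : Set (A × A)} {a b u v : A}
    (h : Relation.TransGen (fun x y => (x, y) ∈ insert (a, b) S) u v) :
    reaches S u v ∨
      ((reaches S u a ∨ u = a) ∧ (reaches S b v ∨ b = v)) := by
  induction h with
  | single hstep =>
    rcases Set.mem_insert_iff.mp hstep with heq | hmem
    · obtain ⟨h1, h2⟩ := Prod.mk.injEq .. ▸ heq
      exact Or.inr ⟨Or.inr h1, Or.inr h2.symm⟩
    · exact Or.inl (Relation.TransGen.single hmem)
  | tail _ hstep ih =>
    rename_i c _
    rcases Set.mem_insert_iff.mp hstep with heq | hmem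
    · obtain ⟨h1, h2⟩ := Prod.mk.injEq .. ▸ heq
      subst h1 h2
      rcases ih with h | ⟨h1, _⟩
      · exact Or.inr ⟨Or.inl h, Or.inr rfl⟩
      · exact Or.inr ⟨h1, Or.inr rfl⟩
    · rcases ih with h | ⟨h1, h2⟩
      · exact Or.inl (h.tail hmem)
      · refine Or.inr ⟨h1, Or.inl ?_⟩
        rcases h2 with h2 | rfl
        · exact h2.tail hmem
        · exact Relation.TransGen.single hmem

lemma cycle_insert {S : Set (A × A)} {a b : A} (hS : Acyclic S) (hab : a ≠ b)
    (h : ¬ Acyclic (insert (a, b) S)) : reaches S b a := by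
  rw [Acyclic] at h
  push_neg at h
  obtain ⟨v, hv⟩ := h
  rcases transGen_insert hv with hc | ⟨h1, h2⟩
  · exact absurd hc (hS v)
  rcases h1 with h1 | rfl
  · rcases h2 with h2 | rfl
    · exact h2.trans h1
    · exact h1
  · rcases h2 with h2 | h2
    · exact h2
    · exact absurd h2.symm hab

lemma not_acyclic_insert {S : Set (A × A)} {a b : A} (h : reaches S b a) :
    ¬ Acyclic (insert (a, b) S) := fun hac =>
  hac a (Relation.TransGen.head (Set.mem_insert _ _)
    (reaches_mono (Set.subset_insert _ _) h))

end Aux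

/-- Zavist–Tideman characterization: `R` is the output ranking of ranked pairs on `P`
under some tiebreaking order iff for all `i ≻_R j` there is a path from `i` to `j` in
`G_R` whose minimum edge weight is at least `w(j,i)`. -/
theorem stmt_11 {A : Type*} [Fintype A] [DecidableEq A]
    (P : List (A → A → Prop)) (hP : ∀ v ∈ P, IsStrictTotalOrder A v)
    (R : A → A → Prop) (hR : IsStrictTotalOrder A R) :
    (∃ L : List (A × A), L.Nodup ∧
        (∀ e : A × A, e ∈ L ↔ (e.1 ≠ e.2 ∧ 0 ≤ margin P e.1 e.2)) ∧
        (∀ i j : Fin L.length, i < j →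
          margin P (L.get j).1 (L.get j).2 ≤ margin P (L.get i).1 (L.get i).2) ∧
        (∀ a b : A, R a b ↔ reaches (greedy (∅ : Set (A × A)) L) a b)) ↔
    (∀ i j : A, R i j →
      reaches {e : A × A | R e.1 e.2 ∧ 0 ≤ margin P e.1 e.2 ∧
        margin P j i ≤ margin P e.1 e.2} i j) := by
  classical
  have htrans : Transitive R := fun a b c h1 h2 => hR.trans a b c h1 h2
  have hirr : ∀ a, ¬ R a a := hR.irrefl
  have hasym : ∀ a b, R a b → ¬ R b a := fun a b h1 h2 => hirr a (htrans h1 h2)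
  have hRne : ∀ a b, R a b → a ≠ b := fun a b h1 h2 => hirr a (h2 ▸ h1)
  constructor
  · rintro ⟨L, hnd, hmem, hsort, hout⟩ i j hij
    have hpw : L.Pairwise (fun a b => margin P b.1 b.2 ≤ margin P a.1 a.2) :=
      List.pairwise_iff_get.mpr hsort
    by_cases hm : margin P j i ≤ 0
    · refine reaches_mono ?_ ((hout i j).mp hij)
      intro e he
      have heL : e ∈ L := by
        have := greedy_subset (∅ : Set (A × A)) L he
        simpa using this
      have hRe : R e.1 e.2 := (hout e.1 e.2).mpr (Relation.TransGen.single he)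
      exact ⟨hRe, ((hmem e).mp heL).2, le_trans hm ((hmem e).mp heL).2⟩
    · push_neg at hm
      have hji : ((j, i) : A × A) ∈ L := (hmem _).mpr ⟨fun h => hRne i j hij h.symm, le_of_lt hm⟩
      obtain ⟨l1, l2, hL⟩ := List.append_of_mem hji
      set S := greedy (∅ : Set (A × A)) l1 with hS
      have hSac : Acyclic S := greedy_acyclic acyclic_empty l1
      have hpre : ∀ f ∈ l1, margin P j i ≤ margin P f.1 f.2 := by
        rw [hL] at hpw
        obtain ⟨-, -, hcross⟩ := List.pairwise_append.mp hpw
        intro f hf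
        exact hcross f hf (j, i) List.mem_cons_self
      have hnotac : ¬ Acyclic (insert ((j, i) : A × A) S) := by
        intro hac
        have hmem' : ((j, i) : A × A) ∈ greedy (∅ : Set (A × A)) L := by
          rw [hL, greedy_append, ← hS, greedy_cons, if_pos hac]
          exact subset_greedy _ _ (Set.mem_insert _ _)
        exact hasym i j hij ((hout j i).mpr (Relation.TransGen.single hmem'))
      have hpath : reaches S i j := cycle_insert hSac (hRne i j hij).symm hnotac
      refine reaches_mono ?_ hpath
      intro e he
      have hel1 : e ∈ l1 := by
        have := greedy_subset (∅ : Set (A × A)) l1 he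
        simpa using this
      have heL : e ∈ L := by rw [hL]; exact List.mem_append_left _ hel1
      have heF : e ∈ greedy (∅ : Set (A × A)) L := by
        rw [hL, greedy_append, ← hS]
        exact subset_greedy _ _ he
      exact ⟨(hout e.1 e.2).mpr (Relation.TransGen.single heF),
        ((hmem e).mp heL).2, hpre e hel1⟩
  · intro hpath
    set key : A × A → ℤ := fun e =>
      -2 * margin P e.1 e.2 + (if R e.1 e.2 then 0 else 1) with hkey
    set Edges : Finset (A × A) :=
      Finset.univ.filter (fun e => e.1 ≠ e.2 ∧ 0 ≤ margin P e.1 e.2) with hEdges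
    set L : List (A × A) := Edges.toList.mergeSort (fun a b => decide (key a ≤ key b)) with hLdef
    have hperm : L.Perm Edges.toList := List.mergeSort_perm _ _
    have hnd : L.Nodup := hperm.nodup_iff.mpr Edges.nodup_toList
    have hmem : ∀ e : A × A, e ∈ L ↔ (e.1 ≠ e.2 ∧ 0 ≤ margin P e.1 e.2) := by
      intro e
      rw [hperm.mem_iff, Finset.mem_toList, hEdges, Finset.mem_filter]
      simp
    have hpw : L.Pairwise (fun a b => key a ≤ key b) := by
      have h := List.pairwise_mergeSort (le := fun a b : A × A => decide (key a ≤ key b))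
        (fun a b c h1 h2 => by simp only [decide_eq_true_eq] at *; omega)
        (fun a b => by simp only [Bool.or_eq_true, decide_eq_true_eq]; omega)
        Edges.toList
      exact h.imp (fun h => by simpa using h)
    have hsort : ∀ i j : Fin L.length, i < j →
        margin P (L.get j).1 (L.get j).2 ≤ margin P (L.get i).1 (L.get i).2 := by
      intro i j hlt
      have h := List.pairwise_iff_get.mp hpw i j hlt
      simp only [hkey] at h
      split_ifs at h <;> omega
    -- main invariant
    have hmain : ∀ l2 l1 : List (A × A), L = l1 ++ l2 →
        greedy {f : A × A | f ∈ l1 ∧ R f.1 f.2} l2 = {f : A × A | f ∈ L ∧ R f.1 f.2} := by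
      intro l2
      induction l2 with
      | nil =>
        intro l1 h
        rw [greedy_nil, h]
        simp
      | cons e l2' ih =>
        intro l1 hL
        have hstep : {f : A × A | f ∈ l1 ++ [e] ∧ R f.1 f.2} =
            (if R e.1 e.2 then insert e {f : A × A | f ∈ l1 ∧ R f.1 f.2}
              else {f : A × A | f ∈ l1 ∧ R f.1 f.2}) := by
          ext f
          split
          · simp only [Set.mem_insert_iff, Set.mem_setOf_eq, List.mem_append,
              List.mem_singleton]
            constructor
            · rintro ⟨hf1 | rfl, hf2⟩
              · exact Or.inr ⟨hf1, hf2⟩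
              · exact Or.inl rfl
            · rintro (rfl | ⟨hf1, hf2⟩)
              · exact ⟨Or.inr rfl, by assumption⟩
              · exact ⟨Or.inl hf1, hf2⟩
          · simp only [Set.mem_setOf_eq, List.mem_append, List.mem_singleton]
            constructor
            · rintro ⟨hf1 | rfl, hf2⟩
              · exact ⟨hf1, hf2⟩
              · exact absurd hf2 (by assumption)
            · rintro ⟨hf1, hf2⟩
              exact ⟨Or.inl hf1, hf2⟩
        rw [greedy_cons]
        by_cases hRe : R e.1 e.2
        · have hac : Acyclic (insert e {f : A × A | f ∈ l1 ∧ R f.1 f.2}) := by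
            refine acyclic_of_subrel htrans hirr ?_
            rintro f (rfl | hf)
            · exact hRe
            · exact hf.2
          rw [if_pos hac]
          have := ih (l1 ++ [e]) (by rw [hL, List.append_assoc]; rfl)
          rw [hstep, if_pos hRe] at this
          exact this
        · have heL : e ∈ L := by
            rw [hL]; exact List.mem_append_right _ List.mem_cons_self
          have he12 := (hmem e).mp heL
          have hRe' : R e.2 e.1 := by
            haveI := hR
            rcases trichotomous (r := R) e.1 e.2 with h | h | h
            · exact absurd h hRe
            · exact absurd h he12.1
            · exact h
          have hp := hpath e.2 e.1 hRe'
          have hTsub : {f : A × A | R f.1 f.2 ∧ 0 ≤ margin P f.1 f.2 ∧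
              margin P e.1 e.2 ≤ margin P f.1 f.2} ⊆ {f : A × A | f ∈ l1 ∧ R f.1 f.2} := by
            rintro f ⟨hf1, hf2, hf3⟩
            have hfL : f ∈ L := (hmem f).mpr ⟨hRne f.1 f.2 hf1, hf2⟩
            refine ⟨?_, hf1⟩
            rw [hL] at hfL
            rcases List.mem_append.mp hfL with h | h
            · exact h
            · exfalso
              rcases List.mem_cons.mp h with rfl | h'
              · exact hRe hf1
              · have hke : key e ≤ key f := by
                  rw [hL] at hpw
                  have h2 := (List.pairwise_append.mp hpw).2.1
                  exact (List.pairwise_cons.mp h2).1 f h'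
                simp only [hkey, if_pos hf1, if_neg hRe] at hke
                omega
          have hcyc : ¬ Acyclic (insert e {f : A × A | f ∈ l1 ∧ R f.1 f.2}) := by
            have hre : reaches {f : A × A | f ∈ l1 ∧ R f.1 f.2} e.2 e.1 :=
              reaches_mono hTsub hp
            exact not_acyclic_insert hre
          rw [if_neg hcyc]
          have := ih (l1 ++ [e]) (by rw [hL, List.append_assoc]; rfl)
          rw [hstep, if_neg hRe] at this
          exact this
    have hfinal : greedy (∅ : Set (A × A)) L = {f : A × A | f ∈ L ∧ R f.1 f.2} := by
      have := hmain L [] rfl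
      simpa using this
    refine ⟨L, hnd, hmem, hsort, ?_⟩
    intro a b
    rw [hfinal]
    constructor
    · intro hab
      refine reaches_mono ?_ (hpath a b hab)
      rintro f ⟨hf1, hf2, -⟩
      exact ⟨(hmem f).mpr ⟨hRne f.1 f.2 hf1, hf2⟩, hf1⟩
    · intro h
      have : Relation.TransGen R a b := Relation.TransGen.mono (fun x y hxy => hxy.2) _ _ h
      haveI hRtr : IsTrans A R := ⟨fun a b c h1 h2 => htrans h1 h2⟩
      rwa [Relation.transGen_eq_self (r := R)] at this
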